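/- Let 0 < H < 1/2, T > 0, d ≥ 1, and let b : [0,T] × ℝ^d → ℝ^d be a continuous bounded measurable function. Suppose that for every x ∈ ℝ^d the SDE X_t = x + ∫_0^t b(s, X_s) ds + B^H_t, t ∈ [0,T], has a strong solution X(x) driven by a fixed d-dimensional fractional Brownian motion B^H, and that pathwise uniqueness holds for this SDE. Then lim_{x → x_0} E[ sup_{0 ≤ t ≤ T} |X_t(x) − X_t(x_0)|² ] = 0 for every x_0 ∈ ℝ^d. -/

import Mathlib

open Filter MeasureTheory Set ProbabilityTheory


noncomputable def mr (a : ℕ → ℕ → ℝ) : ℕ → ℝ := fun m =>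
  ⨆ j : ℕ, Filter.liminf
    (fun n => a n m + j * ∑ l ∈ (Finset.range m).attach,
      |a n l.1 - mr a l.1|) Filter.atTop
termination_by m => m
decreasing_by exact Finset.mem_range.1 l.2

noncomputable def pen (a : ℕ → ℕ → ℝ) (m n : ℕ) : ℝ :=
  ∑ l ∈ Finset.range m, |a n l - mr a l|

lemma mr_eq (a : ℕ → ℕ → ℝ) (m : ℕ) :
    mr a m = ⨆ j : ℕ, Filter.liminf (fun n => a n m + j * pen a m n) Filter.atTop := by
  rw [mr]
  congr 1; ext j; congr 1; ext n
  rw [pen, Finset.sum_attach (Finset.range m) (fun l => |a n l - mr a l|)]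

lemma measurable_mr {Ω : Type*} [MeasurableSpace Ω] (A : Ω → ℕ → ℕ → ℝ)
    (hA : ∀ n l, Measurable fun ω => A ω n l) (m : ℕ) :
    Measurable fun ω => mr (A ω) m := by
  induction m using Nat.strong_induction_on with
  | _ m ih =>
    rw [funext fun ω => mr_eq (A ω) m]
    refine Measurable.iSup fun j => Measurable.liminf fun n => ?_
    refine ((hA n m).add (measurable_const.mul ?_))
    refine Finset.measurable_sum _ fun l hl => ?_
    exact ((hA n l).sub (ih l (Finset.mem_range.1 hl))).abs

lemma pen_nonneg (a : ℕ → ℕ → ℝ) (m n : ℕ) : 0 ≤ pen a m n :=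
  Finset.sum_nonneg fun _ _ => abs_nonneg _

lemma abs_le_pen (a : ℕ → ℕ → ℝ) {l m : ℕ} (h : l < m) (n : ℕ) :
    |a n l - mr a l| ≤ pen a m n := by
  rw [pen]
  exact Finset.single_le_sum (f := fun l => |a n l - mr a l|)
    (fun _ _ => abs_nonneg _) (Finset.mem_range.2 h)

lemma mr_frequently (a : ℕ → ℕ → ℝ) (M : ℕ → ℝ) (hM : ∀ n l, |a n l| ≤ M l) :
    ∀ m, ∀ ε > (0:ℝ), ∃ᶠ n in atTop, pen a m n < ε := by
  intro m
  induction m with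
  | zero =>
    intro ε hε
    exact Frequently.of_forall fun n => by simpa [pen] using hε
  | succ m ih =>
    intro ε hε
    set r := mr a m with hr
    set u : ℕ → ℕ → ℝ := fun j n => a n m + (j : ℝ) * pen a m n with hu
    have hMm : (0:ℝ) ≤ M m := le_trans (abs_nonneg _) (hM 0 m)
    have hlb : ∀ j n, -(M m) ≤ u j n := by
      intro j n
      have h1 : -(M m) ≤ a n m := neg_le_of_abs_le (hM n m)
      simp only [hu]
      nlinarith [pen_nonneg a m n, Nat.cast_nonneg (α := ℝ) j]
    have hbdd : ∀ j, IsBoundedUnder (· ≥ ·) atTop (u j) := fun j =>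
      isBoundedUnder_of ⟨-(M m), fun n => hlb j n⟩
    have hub' : ∀ n, pen a m n ≤ ∑ l ∈ Finset.range m, (M l + |mr a l|) := by
      intro n
      refine Finset.sum_le_sum fun l _ => ?_
      calc |a n l - mr a l| ≤ |a n l| + |mr a l| := abs_sub _ _
        _ ≤ M l + |mr a l| := by linarith [hM n l]
    have hcob : ∀ j, IsCoboundedUnder (· ≥ ·) atTop (u j) := by
      intro j
      refine isCoboundedUnder_ge_of_le atTop
        (x := M m + (j : ℝ) * ∑ l ∈ Finset.range m, (M l + |mr a l|)) fun n => ?_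
      simp only [hu]
      have := le_of_abs_le (hM n m)
      have := hub' n
      have : (j : ℝ) * pen a m n ≤ (j : ℝ) * ∑ l ∈ Finset.range m, (M l + |mr a l|) :=
        mul_le_mul_of_nonneg_left (hub' n) (Nat.cast_nonneg j)
      nlinarith [le_of_abs_le (hM n m)]
    set A : ℕ → ℝ := fun j => Filter.liminf (u j) atTop with hA
    have hAub : ∀ j, A j ≤ M m + 1 := by
      intro j
      refine liminf_le_of_frequently_le ?_ (hbdd j)
      have hpos : (0:ℝ) < 1 / (j + 1) := by positivity
      refine (ih (1 / (j+1)) hpos).mono fun n hn => ?_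
      have hj1 : (j : ℝ) * pen a m n ≤ (j : ℝ) * (1 / (j+1)) :=
        mul_le_mul_of_nonneg_left hn.le (Nat.cast_nonneg j)
      have hj2 : (j : ℝ) * (1 / (j+1)) ≤ 1 := by
        rw [mul_one_div]
        rw [div_le_one (by positivity)]
        linarith
      have := le_of_abs_le (hM n m)
      simp only [hu]
      linarith
    have hBdd : BddAbove (Set.range A) := ⟨M m + 1, by rintro x ⟨j, rfl⟩; exact hAub j⟩
    have hrsup : r = ⨆ j, A j := mr_eq a m
    have hrA : ∀ j, A j ≤ r := by
      intro j; rw [hrsup]; exact le_ciSup hBdd j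
    set η := ε / 8 with hη
    have hηpos : 0 < η := by positivity
    obtain ⟨j', hj'⟩ : ∃ j', r - η < A j' := by
      have : r - η < ⨆ j, A j := by rw [← hrsup]; linarith
      exact exists_lt_of_lt_ciSup this
    set ε' := min 1 η with hε'
    have hε'pos : 0 < ε' := lt_min one_pos hηpos
    set K := 2 * M m + 2 with hK
    have hKpos : 0 < K := by linarith
    set δ := min (ε / 2) (η / (j' + 1)) with hδ
    have hδpos : 0 < δ := lt_min (by positivity) (by positivity)
    set j := max j' ⌈K / δ⌉₊ with hj
    have hjK : K ≤ (j : ℝ) * δ := by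
      have h1 : K / δ ≤ (⌈K / δ⌉₊ : ℝ) := Nat.le_ceil _
      have h2 : (⌈K / δ⌉₊ : ℝ) ≤ (j : ℝ) := by exact_mod_cast Nat.le_max_right j' ⌈K / δ⌉₊
      calc K = K / δ * δ := by field_simp
        _ ≤ (j : ℝ) * δ := by nlinarith
    have hjpos : (0:ℝ) < j := by
      have : 0 < K / δ := by positivity
      have h1 : 1 ≤ ⌈K / δ⌉₊ := Nat.one_le_iff_ne_zero.2 (by
        simp only [ne_eq, Nat.ceil_eq_zero, not_le]; exact this)
      have : 1 ≤ j := le_trans h1 (Nat.le_max_right _ _)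
      exact_mod_cast Nat.lt_of_lt_of_le Nat.zero_lt_one this
    have hfreq : ∃ᶠ n in atTop, u j n < A j + ε' :=
      frequently_lt_of_liminf_lt (hcob j) (by linarith [hε'pos])
    have hev : ∀ᶠ n in atTop, A j' - η < u j' n :=
      eventually_lt_of_lt_liminf (by linarith) (hbdd j')
    refine (hfreq.and_eventually hev).mono ?_
    rintro n ⟨h1, h2⟩
    -- pen a m n < δ
    have hAjr : A j ≤ r := hrA j
    have ham_ub : a n m < r + ε' := by
      have : (j:ℝ) * pen a m n ≥ 0 :=
        mul_nonneg (Nat.cast_nonneg j) (pen_nonneg a m n)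
      simp only [hu] at h1
      linarith
    have hjpen : (j : ℝ) * pen a m n < K := by
      have h3 : -(M m) ≤ a n m := neg_le_of_abs_le (hM n m)
      have h4 : ε' ≤ 1 := min_le_left _ _
      simp only [hu] at h1
      nlinarith [hAub j]
    have hpen : pen a m n < δ := by
      by_contra hcon
      push_neg at hcon
      have : (j:ℝ) * δ ≤ (j:ℝ) * pen a m n := mul_le_mul_of_nonneg_left hcon (le_of_lt hjpos)
      linarith
    have hj'pen : (j' : ℝ) * pen a m n ≤ η := by
      have hδ2 : δ ≤ η / (j' + 1) := min_le_right _ _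
      have : (j' : ℝ) * pen a m n ≤ (j' : ℝ) * δ :=
        mul_le_mul_of_nonneg_left hpen.le (Nat.cast_nonneg j')
      have h5 : (j' : ℝ) * δ ≤ (j' : ℝ) * (η / (j' + 1)) :=
        mul_le_mul_of_nonneg_left hδ2 (Nat.cast_nonneg j')
      have h6 : (j' : ℝ) * (η / (j' + 1)) ≤ η := by
        rw [mul_div_assoc']
        rw [div_le_iff₀ (by positivity)]
        nlinarith [Nat.cast_nonneg (α := ℝ) j', hηpos]
      linarith
    have ham_lb : r - 3 * η < a n m := by
      simp only [hu] at h2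
      linarith [hj' ]
    have habs : |a n m - r| < ε / 2 := by
      rw [abs_sub_lt_iff]
      constructor
      · have : ε' ≤ η := min_le_right _ _
        nlinarith [hηpos]
      · nlinarith [hηpos]
    have hpenδ : pen a m n < ε / 2 := lt_of_lt_of_le hpen (min_le_left _ _)
    have : pen a (m+1) n = pen a m n + |a n m - r| := Finset.sum_range_succ _ m
    linarith

lemma mr_subseq (a : ℕ → ℕ → ℝ) (M : ℕ → ℝ) (hM : ∀ n l, |a n l| ≤ M l) :
    ∃ φ : ℕ → ℕ, StrictMono φ ∧
      ∀ l, Tendsto (fun k => a (φ k) l) atTop (nhds (mr a l)) := by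
  have H : ∀ k N : ℕ, ∃ n, N < n ∧ pen a (k+1) n < 1/(k+1) := by
    intro k N
    have hpos : (0:ℝ) < 1/(k+1) := by positivity
    have := (mr_frequently a M hM (k+1) (1/(k+1)) hpos).and_eventually
      (eventually_gt_atTop N)
    obtain ⟨n, h1, h2⟩ := this.exists
    exact ⟨n, h2, h1⟩
  set φ : ℕ → ℕ := fun k =>
    Nat.rec (H 0 0).choose (fun k ih => (H (k+1) ih).choose) k with hφ
  have hmono : StrictMono φ := by
    apply strictMono_nat_of_lt_succ
    intro k
    exact (H (k+1) (φ k)).choose_spec.1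
  have hpen : ∀ k, pen a (k+1) (φ k) < 1/(k+1) := by
    intro k
    cases k with
    | zero => exact (H 0 0).choose_spec.2
    | succ k => exact (H (k+1) (φ k)).choose_spec.2
  refine ⟨φ, hmono, fun l => ?_⟩
  rw [← tendsto_sub_nhds_zero_iff]
  have h0 : Tendsto (fun k : ℕ => 1/((k:ℝ)+1)) atTop (nhds 0) :=
    tendsto_one_div_add_atTop_nhds_zero_nat
  refine squeeze_zero_norm' ?_ h0
  filter_upwards [eventually_ge_atTop l] with k hk
  have h1 : |a (φ k) l - mr a l| ≤ pen a (k+1) (φ k) :=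
    abs_le_pen a (Nat.lt_succ_of_le hk) (φ k)
  exact le_trans h1 (hpen k).le

lemma mr_zero (a : ℕ → ℕ → ℝ) : mr a 0 = liminf (fun n => a n 0) atTop := by
  rw [mr_eq]
  have : ∀ j : ℕ, liminf (fun n => a n 0 + j * pen a 0 n) atTop
      = liminf (fun n => a n 0) atTop := by
    intro j
    congr 1
    funext n
    simp [pen]
  simp_rw [this]
  exact ciSup_const

lemma tendsto_of_liminf_both (g : ℕ → ℝ) (v K : ℝ) (hb : ∀ n, |g n| ≤ K)
    (h1 : liminf g atTop = v)
    (h2 : liminf (fun n => -g n) atTop = -v) : Tendsto g atTop (nhds v) := by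
  rw [Metric.tendsto_atTop]
  intro ε hε
  have hbd1 : IsBoundedUnder (· ≥ ·) atTop g :=
    isBoundedUnder_of ⟨-K, fun n => neg_le_of_abs_le (hb n)⟩
  have hbd2 : IsBoundedUnder (· ≥ ·) atTop (fun n => -g n) :=
    isBoundedUnder_of ⟨-K, fun n => by
      have := le_of_abs_le (hb n); linarith⟩
  have e1 : ∀ᶠ n in atTop, v - ε/2 < g n :=
    eventually_lt_of_lt_liminf (by rw [h1]; linarith) hbd1
  have e2 : ∀ᶠ n in atTop, -v - ε/2 < -g n :=
    eventually_lt_of_lt_liminf (by rw [h2]; linarith) hbd2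
  obtain ⟨N, hN⟩ := (e1.and e2).exists_forall_of_atTop
  refine ⟨N, fun n hn => ?_⟩
  obtain ⟨ha, hb'⟩ := hN n hn
  rw [Real.dist_eq, abs_sub_lt_iff]
  constructor <;> linarith

lemma exists_tm (T : ℝ) (hT : 0 < T) : ∃ tm : ℕ → ℝ,
    (∀ m, tm m ∈ Set.Icc (0:ℝ) T) ∧
    ∀ t ∈ Set.Icc (0:ℝ) T, ∀ δ > (0:ℝ), ∃ m, |tm m - t| < δ := by
  obtain ⟨e, he⟩ := exists_surjective_nat ℚ
  refine ⟨fun m => max 0 (min T (e m)), fun m => ⟨le_max_left _ _, ?_⟩, ?_⟩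
  · exact max_le hT.le (min_le_left _ _)
  · intro t ht δ hδ
    obtain ⟨q, hq⟩ := exists_rat_near t hδ
    obtain ⟨m, rfl⟩ := he q
    refine ⟨m, ?_⟩
    have h1 : |max 0 (min T (e m)) - t| ≤ |(e m : ℝ) - t| := by
      rcases le_total ((e m : ℝ)) 0 with h | h
      · have : max 0 (min T (e m)) = 0 := by
          rw [max_eq_left]
          exact (min_le_right _ _).trans h
        rw [this]
        rw [abs_sub_comm ((e m : ℝ)) t, abs_of_nonneg (by linarith [ht.1] : (0:ℝ) ≤ t - e m)]
        rw [abs_of_nonpos (by linarith [ht.1] : (0:ℝ) - t ≤ 0)]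
        linarith [ht.1]
      · rcases le_total T ((e m : ℝ)) with h' | h'
        · have : max 0 (min T (e m)) = T := by
            rw [min_eq_left h', max_eq_right hT.le]
          rw [this]
          rw [abs_of_nonneg (by linarith [ht.2] : (0:ℝ) ≤ T - t),
            abs_of_nonneg (by linarith [ht.2] : (0:ℝ) ≤ (e m : ℝ) - t)]
          linarith [ht.2]
        · have : max 0 (min T (e m)) = (e m : ℝ) := by
            rw [min_eq_right h', max_eq_right h]
          rw [this]
    calc |max 0 (min T (e m)) - t| ≤ |(e m : ℝ) - t| := h1
      _ < δ := by rw [abs_sub_comm]; exact hq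

section helpers
variable {d : ℕ}

lemma coord_abs_le_norm (v : EuclideanSpace ℝ (Fin d)) (i : Fin d) : |v i| ≤ ‖v‖ := by
  rw [EuclideanSpace.norm_eq, ← Real.sqrt_sq_eq_abs]
  apply Real.sqrt_le_sqrt
  have : v i ^ 2 ≤ ∑ j, v j ^ 2 :=
    Finset.single_le_sum (f := fun j => v j ^ 2) (fun j _ => sq_nonneg _) (Finset.mem_univ i)
  simpa [sq_abs] using this

lemma tendsto_euclid_iff {f : ℕ → EuclideanSpace ℝ (Fin d)} {v : EuclideanSpace ℝ (Fin d)} :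
    Tendsto f atTop (nhds v) ↔ ∀ i, Tendsto (fun n => f n i) atTop (nhds (v i)) := by
  constructor
  · intro h i
    exact (((EuclideanSpace.proj (𝕜 := ℝ) i).continuous).tendsto v).comp h
  · intro h
    have h2 : Tendsto (fun n => (EuclideanSpace.equiv (Fin d) ℝ) (f n)) atTop
        (nhds ((EuclideanSpace.equiv (Fin d) ℝ) v)) := tendsto_pi_nhds.2 h
    have := ((EuclideanSpace.equiv (Fin d) ℝ).symm.continuous.tendsto _).comp h2
    simpa [Function.comp_def] using this

end helpers

section det

variable {d : ℕ} {T C : ℝ}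
  {b : ℝ → EuclideanSpace ℝ (Fin d) → EuclideanSpace ℝ (Fin d)}
  {β : ℝ → EuclideanSpace ℝ (Fin d)}

lemma det_comp_cont (hb_cont : ContinuousOn (Function.uncurry b) ((Icc 0 T) ×ˢ univ))
    {f : ℝ → EuclideanSpace ℝ (Fin d)} (hf : ContinuousOn f (Icc 0 T)) :
    ContinuousOn (fun u => b u (f u)) (Icc 0 T) := by
  have h1 : ContinuousOn (fun u => (u, f u)) (Icc 0 T) := continuousOn_id.prodMk hf
  exact hb_cont.comp h1 (fun u hu => ⟨hu, trivial⟩)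

lemma det_integrableOn (hb_cont : ContinuousOn (Function.uncurry b) ((Icc 0 T) ×ˢ univ))
    {f : ℝ → EuclideanSpace ℝ (Fin d)} (hf : ContinuousOn f (Icc 0 T))
    {s t : ℝ} (hs : s ∈ Icc 0 T) (ht : t ∈ Icc 0 T) :
    IntegrableOn (fun u => b u (f u)) (Ioc s t) := by
  rcases le_or_gt s t with hst | hst
  · have hIcc : Icc s t ⊆ Icc 0 T := Icc_subset_Icc hs.1 ht.2
    have := ((det_comp_cont hb_cont hf).mono hIcc).integrableOn_compact (μ := volume)
      isCompact_Icc
    exact this.mono_set Ioc_subset_Icc_self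
  · rw [Set.Ioc_eq_empty (not_lt.2 hst.le)]
    exact integrableOn_empty

lemma det_modulus (hb_cont : ContinuousOn (Function.uncurry b) ((Icc 0 T) ×ˢ univ))
    (hb_bdd : ∀ t ∈ Icc (0:ℝ) T, ∀ y, ‖b t y‖ ≤ C)
    (x' : EuclideanSpace ℝ (Fin d)) {f : ℝ → EuclideanSpace ℝ (Fin d)}
    (hf : ContinuousOn f (Icc 0 T))
    (heq : ∀ t ∈ Icc (0:ℝ) T, f t = x' + (∫ s in Ioc (0:ℝ) t, b s (f s)) + β t) :
    ∀ s ∈ Icc (0:ℝ) T, ∀ t ∈ Icc (0:ℝ) T, s ≤ t →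
      ‖f t - f s‖ ≤ C * (t - s) + ‖β t - β s‖ := by
  intro s hs t ht hst
  have h0 : (0:ℝ) ∈ Icc (0:ℝ) T := ⟨le_rfl, hs.1.trans hs.2⟩
  have hint1 : IntegrableOn (fun u => b u (f u)) (Ioc 0 s) := det_integrableOn hb_cont hf h0 hs
  have hint2 : IntegrableOn (fun u => b u (f u)) (Ioc s t) := det_integrableOn hb_cont hf hs ht
  have hsplit : (∫ u in Ioc (0:ℝ) t, b u (f u)) =
      (∫ u in Ioc (0:ℝ) s, b u (f u)) + ∫ u in Ioc s t, b u (f u) := by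
    rw [← Set.Ioc_union_Ioc_eq_Ioc hs.1 hst]
    exact setIntegral_union (Set.Ioc_disjoint_Ioc_of_le le_rfl) measurableSet_Ioc hint1 hint2
  have hdiff : f t - f s = (∫ u in Ioc s t, b u (f u)) + (β t - β s) := by
    rw [heq t ht, heq s hs, hsplit]; abel
  rw [hdiff]
  refine (norm_add_le _ _).trans ?_
  have hn : ‖∫ u in Ioc s t, b u (f u)‖ ≤ C * (t - s) := by
    have hlt : volume (Ioc s t) < ⊤ := by
      rw [Real.volume_Ioc]; exact ENNReal.ofReal_lt_top
    have := norm_setIntegral_le_of_norm_le_const (μ := volume) hlt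
      (fun u hu => hb_bdd u ⟨hs.1.trans hu.1.le, hu.2.trans ht.2⟩ (f u))
    rwa [Measure.real, Real.volume_Ioc, ENNReal.toReal_ofReal (sub_nonneg.2 hst)] at this
  linarith [norm_sub_rev (β s) (β t) ▸ le_refl ‖β t - β s‖]

lemma det_bound (hb_cont : ContinuousOn (Function.uncurry b) ((Icc 0 T) ×ˢ univ))
    (hb_bdd : ∀ t ∈ Icc (0:ℝ) T, ∀ y, ‖b t y‖ ≤ C)
    (x' : EuclideanSpace ℝ (Fin d)) {f : ℝ → EuclideanSpace ℝ (Fin d)}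
    (heq : ∀ t ∈ Icc (0:ℝ) T, f t = x' + (∫ s in Ioc (0:ℝ) t, b s (f s)) + β t) :
    ∀ t ∈ Icc (0:ℝ) T, ‖f t‖ ≤ ‖x'‖ + C * T + ‖β t‖ := by
  intro t ht
  rw [heq t ht]
  refine (norm_add_le _ _).trans ?_
  refine add_le_add ((norm_add_le _ _).trans (add_le_add le_rfl ?_)) le_rfl
  have hlt : volume (Ioc (0:ℝ) t) < ⊤ := by
    rw [Real.volume_Ioc]; exact ENNReal.ofReal_lt_top
  have := norm_setIntegral_le_of_norm_le_const (μ := volume) hlt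
    (fun u hu => hb_bdd u ⟨hu.1.le, hu.2.trans ht.2⟩ (f u))
  rw [Measure.real, Real.volume_Ioc, sub_zero, ENNReal.toReal_ofReal ht.1] at this
  refine this.trans ?_
  have hC : 0 ≤ C := le_trans (norm_nonneg _) (hb_bdd 0 ⟨le_rfl, ht.1.trans ht.2⟩ 0)
  nlinarith [ht.2, ht.1]

end det

section det2
variable {d : ℕ} {T C : ℝ}
  {b : ℝ → EuclideanSpace ℝ (Fin d) → EuclideanSpace ℝ (Fin d)}
  {β : ℝ → EuclideanSpace ℝ (Fin d)}

lemma det_modulus' (hb_cont : ContinuousOn (Function.uncurry b) ((Icc 0 T) ×ˢ univ))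
    (hb_bdd : ∀ t ∈ Icc (0:ℝ) T, ∀ y, ‖b t y‖ ≤ C)
    (x' : EuclideanSpace ℝ (Fin d)) {f : ℝ → EuclideanSpace ℝ (Fin d)}
    (hf : ContinuousOn f (Icc 0 T))
    (heq : ∀ t ∈ Icc (0:ℝ) T, f t = x' + (∫ s in Ioc (0:ℝ) t, b s (f s)) + β t) :
    ∀ s ∈ Icc (0:ℝ) T, ∀ t ∈ Icc (0:ℝ) T,
      ‖f t - f s‖ ≤ C * |t - s| + ‖β t - β s‖ := by
  intro s hs t ht
  rcases le_total s t with hst | hst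
  · have := det_modulus hb_cont hb_bdd x' hf heq s hs t ht hst
    rwa [abs_of_nonneg (sub_nonneg.2 hst)]
  · have := det_modulus hb_cont hb_bdd x' hf heq t ht s hs hst
    have h2 : ‖f t - f s‖ = ‖f s - f t‖ := norm_sub_rev _ _
    have h3 : ‖β t - β s‖ = ‖β s - β t‖ := norm_sub_rev _ _
    rw [h2, h3, abs_of_nonpos (sub_nonpos.2 hst)]
    linarith

lemma det_main (hT : 0 < T) (hC : 0 ≤ C)
    (hb_cont : ContinuousOn (Function.uncurry b) ((Icc 0 T) ×ˢ univ))
    (hb_bdd : ∀ t ∈ Icc (0:ℝ) T, ∀ y, ‖b t y‖ ≤ C)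
    (hβ : ContinuousOn β (Icc 0 T))
    (tm : ℕ → ℝ) (htm : ∀ m, tm m ∈ Icc (0:ℝ) T)
    (ρ : ℝ → ℕ → ℕ)
    (hρ : ∀ t ∈ Icc (0:ℝ) T, ∀ j : ℕ, |tm (ρ t j) - t| < 1/(j+1))
    (xs : ℕ → EuclideanSpace ℝ (Fin d)) (x₀ : EuclideanSpace ℝ (Fin d))
    (hxs : Tendsto xs atTop (nhds x₀))
    (fs : ℕ → ℝ → EuclideanSpace ℝ (Fin d))
    (hfs_cont : ∀ n, ContinuousOn (fs n) (Icc 0 T))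
    (hfs_eq : ∀ n, ∀ t ∈ Icc (0:ℝ) T,
      fs n t = xs n + (∫ s in Ioc (0:ℝ) t, b s (fs n s)) + β t)
    (φ : ℕ → ℕ) (hφ : StrictMono φ)
    (rv : ℕ → Fin d → ℝ)
    (hconv : ∀ m i, Tendsto (fun k => fs (φ k) (tm m) i) atTop (nhds (rv m i)))
    (L : ℝ → EuclideanSpace ℝ (Fin d))
    (hL : ∀ t ∈ Icc (0:ℝ) T, ∀ i, L t i = liminf (fun j => rv (ρ t j) i) atTop) :
    (∀ t ∈ Icc (0:ℝ) T, Tendsto (fun k => fs (φ k) t) atTop (nhds (L t))) ∧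
    ContinuousOn L (Icc 0 T) ∧
    (∀ t ∈ Icc (0:ℝ) T, L t = x₀ + (∫ s in Ioc (0:ℝ) t, b s (L s)) + β t) := by
  have hmod : ∀ n, ∀ s ∈ Icc (0:ℝ) T, ∀ t ∈ Icc (0:ℝ) T,
      ‖fs n t - fs n s‖ ≤ C * |t - s| + ‖β t - β s‖ :=
    fun n => det_modulus' hb_cont hb_bdd (xs n) (hfs_cont n) (hfs_eq n)
  -- convergence at the tm's, in E
  set rvE : ℕ → EuclideanSpace ℝ (Fin d) :=
    fun m => (EuclideanSpace.equiv (Fin d) ℝ).symm (rv m) with hrvE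
  have hrvEi : ∀ m i, rvE m i = rv m i := fun m i => rfl
  have hconvE : ∀ m, Tendsto (fun k => fs (φ k) (tm m)) atTop (nhds (rvE m)) := by
    intro m
    rw [tendsto_euclid_iff]
    intro i
    rw [hrvEi]
    exact hconv m i
  -- density
  have hdense : ∀ t ∈ Icc (0:ℝ) T, ∀ δ > (0:ℝ), ∃ m, |tm m - t| < δ := by
    intro t ht δ hδ
    obtain ⟨j, hj⟩ := exists_nat_one_div_lt hδ
    exact ⟨ρ t j, (hρ t ht j).trans hj⟩
  -- uniform continuity of β
  have hβu := isCompact_Icc.uniformContinuousOn_of_continuous hβ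
  -- Cauchy at each point
  have hcauchy : ∀ t ∈ Icc (0:ℝ) T, CauchySeq (fun k => fs (φ k) t) := by
    intro t ht
    rw [Metric.cauchySeq_iff]
    intro ε hε
    obtain ⟨δ₁, hδ₁pos, hδ₁⟩ := Metric.uniformContinuousOn_iff.1 hβu (ε/6) (by positivity)
    set δ := min δ₁ (ε/(6*(C+1))) with hδdef
    have hδpos : 0 < δ := lt_min hδ₁pos (by positivity)
    obtain ⟨m, hm⟩ := hdense t ht δ hδpos
    have hmem := htm m
    have hest : ∀ k, dist (fs (φ k) t) (fs (φ k) (tm m)) < ε/3 := by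
      intro k
      rw [dist_eq_norm]
      have h1 := hmod (φ k) (tm m) hmem t ht
      have h2 : ‖β t - β (tm m)‖ < ε/6 := by
        have := hδ₁ t ht (tm m) hmem (by
          rw [Real.dist_eq]
          have : |t - tm m| = |tm m - t| := abs_sub_comm t (tm m)
          rw [this]
          exact hm.trans_le (min_le_left _ _))
        rwa [dist_eq_norm] at this
      have h3 : C * |t - tm m| ≤ ε/6 := by
        have habs : |t - tm m| ≤ ε/(6*(C+1)) := by
          rw [abs_sub_comm]
          exact hm.le.trans (min_le_right _ _)
        calc C * |t - tm m| ≤ C * (ε/(6*(C+1))) :=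
              mul_le_mul_of_nonneg_left habs hC
          _ ≤ ε/6 := by
              have h6 : (0:ℝ) < 6*(C+1) := by positivity
              rw [mul_div_assoc', div_le_div_iff₀ h6 (by norm_num : (0:ℝ) < 6)]
              nlinarith [hε.le]

      linarith
    obtain ⟨N, hN⟩ := (Metric.tendsto_atTop.1 (hconvE m)) (ε/6) (by positivity)
    refine ⟨N, fun k1 hk1 k2 hk2 => ?_⟩
    have := dist_triangle4 (fs (φ k1) t) (fs (φ k1) (tm m)) (fs (φ k2) (tm m)) (fs (φ k2) t)
    have hd12 : dist (fs (φ k1) (tm m)) (fs (φ k2) (tm m)) < ε/3 := by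
      have ha := hN k1 hk1
      have hb := hN k2 hk2
      calc dist (fs (φ k1) (tm m)) (fs (φ k2) (tm m))
          ≤ dist (fs (φ k1) (tm m)) (rvE m) + dist (rvE m) (fs (φ k2) (tm m)) :=
            dist_triangle _ _ _
        _ < ε/3 := by rw [dist_comm (rvE m)]; linarith
    have h1 := hest k1
    have h2 := hest k2
    rw [dist_comm (fs (φ k2) (tm m))] at this
    linarith
  -- limit function
  set Λ : ℝ → EuclideanSpace ℝ (Fin d) :=
    fun t => limUnder atTop (fun k => fs (φ k) t) with hΛdef
  have hΛ : ∀ t ∈ Icc (0:ℝ) T, Tendsto (fun k => fs (φ k) t) atTop (nhds (Λ t)) :=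
    fun t ht => (hcauchy t ht).tendsto_limUnder
  have hrvΛ : ∀ m, rvE m = Λ (tm m) :=
    fun m => tendsto_nhds_unique (hconvE m) (hΛ (tm m) (htm m))
  have hΛmod : ∀ s ∈ Icc (0:ℝ) T, ∀ t ∈ Icc (0:ℝ) T,
      ‖Λ t - Λ s‖ ≤ C * |t - s| + ‖β t - β s‖ := by
    intro s hs t ht
    have htend : Tendsto (fun k => ‖fs (φ k) t - fs (φ k) s‖) atTop
        (nhds ‖Λ t - Λ s‖) := (((hΛ t ht).sub (hΛ s hs)).norm)
    exact le_of_tendsto htend (Eventually.of_forall fun k => hmod (φ k) s hs t ht)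
  have hΛcont : ∀ t ∈ Icc (0:ℝ) T,
      Tendsto (fun j => Λ (tm (ρ t j))) atTop (nhds (Λ t)) := by
    intro t ht
    rw [tendsto_iff_dist_tendsto_zero]
    have hb1 : Tendsto (fun j : ℕ => C * |tm (ρ t j) - t|) atTop (nhds 0) := by
      have h1 : Tendsto (fun j : ℕ => |tm (ρ t j) - t|) atTop (nhds 0) := by
        refine squeeze_zero (fun j => abs_nonneg _) (fun j => (hρ t ht j).le) ?_
        exact tendsto_one_div_add_atTop_nhds_zero_nat
      simpa using h1.const_mul C
    have hb2 : Tendsto (fun j : ℕ => ‖β (tm (ρ t j)) - β t‖) atTop (nhds 0) := by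
      have htmt : Tendsto (fun j => tm (ρ t j)) atTop (nhds t) := by
        rw [tendsto_iff_dist_tendsto_zero]
        refine squeeze_zero (fun j => dist_nonneg) (fun j => ?_) 
          tendsto_one_div_add_atTop_nhds_zero_nat
        rw [Real.dist_eq]
        exact (hρ t ht j).le
      have hw : Tendsto (fun j => tm (ρ t j)) atTop (nhdsWithin t (Icc (0:ℝ) T)) := by
        rw [tendsto_nhdsWithin_iff]
        exact ⟨htmt, Eventually.of_forall fun j => htm _⟩
      have := ((hβ t ht).tendsto.comp hw).sub (tendsto_const_nhds (x := β t))
      simpa using this.norm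
    refine squeeze_zero (fun j => dist_nonneg) (fun j => ?_) (by simpa using hb1.add hb2)
    rw [dist_eq_norm]
    exact hΛmod t ht (tm (ρ t j)) (htm _)
  have hLΛ : ∀ t ∈ Icc (0:ℝ) T, L t = Λ t := by
    intro t ht
    have hcoord : ∀ i, L t i = Λ t i := by
      intro i
      rw [hL t ht i]
      have : ∀ j, rv (ρ t j) i = Λ (tm (ρ t j)) i := by
        intro j
        rw [← hrvEi, hrvΛ]
      simp_rw [this]
      have htendi : Tendsto (fun j => Λ (tm (ρ t j)) i) atTop (nhds (Λ t i)) :=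
        (((EuclideanSpace.proj (𝕜 := ℝ) i).continuous).tendsto _).comp (hΛcont t ht)
      exact htendi.liminf_eq
    ext i
    exact hcoord i
  refine ⟨fun t ht => by rw [hLΛ t ht]; exact hΛ t ht, ?_, ?_⟩
  · intro t ht
    have key : ∀ s ∈ Icc (0:ℝ) T, dist (L s) (L t) ≤ C * |s - t| + dist (β s) (β t) := by
      intro s hs
      rw [hLΛ s hs, hLΛ t ht, dist_eq_norm, dist_eq_norm]
      exact hΛmod t ht s hs
    have h0 : Tendsto (fun s => C * |s - t| + dist (β s) (β t)) (nhdsWithin t (Icc 0 T))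
        (nhds 0) := by
      have h1 : Tendsto (fun s : ℝ => C * |s - t|) (nhdsWithin t (Icc 0 T)) (nhds 0) := by
        have hcont : Continuous (fun s : ℝ => C * |s - t|) := by fun_prop
        have h2 := hcont.tendsto t
        simp only [sub_self, abs_zero, mul_zero] at h2
        exact h2.mono_left nhdsWithin_le_nhds
      have h2 : Tendsto (fun s => dist (β s) (β t)) (nhdsWithin t (Icc 0 T)) (nhds 0) := by
        have := (hβ t ht).tendsto
        rw [tendsto_iff_dist_tendsto_zero] at this
        exact this
      simpa using h1.add h2
    rw [ContinuousWithinAt, tendsto_iff_dist_tendsto_zero]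
    refine squeeze_zero' (Eventually.of_forall fun s => dist_nonneg) ?_ h0
    filter_upwards [self_mem_nhdsWithin] with s hs
    exact key s hs
  · intro t ht
    have hlim1 : Tendsto (fun k => fs (φ k) t) atTop (nhds (L t)) := by
      rw [hLΛ t ht]; exact hΛ t ht
    have hlim2 : Tendsto (fun k => xs (φ k) + (∫ s in Ioc (0:ℝ) t, b s (fs (φ k) s)) + β t)
        atTop (nhds (x₀ + (∫ s in Ioc (0:ℝ) t, b s (L s)) + β t)) := by
      have hx : Tendsto (fun k => xs (φ k)) atTop (nhds x₀) :=
        hxs.comp hφ.tendsto_atTop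
      have hint : Tendsto (fun k => ∫ s in Ioc (0:ℝ) t, b s (fs (φ k) s)) atTop
          (nhds (∫ s in Ioc (0:ℝ) t, b s (L s))) := by
        have hsub : Ioc (0:ℝ) t ⊆ Icc (0:ℝ) T := fun s hs => ⟨hs.1.le, hs.2.trans ht.2⟩
        refine tendsto_integral_of_dominated_convergence (fun _ => C) ?_ ?_ ?_ ?_
        · intro k
          exact ((det_comp_cont hb_cont (hfs_cont (φ k))).mono hsub).aestronglyMeasurable
            measurableSet_Ioc
        · refine integrableOn_const ?_
          rw [Real.volume_Ioc]; exact ENNReal.ofReal_ne_top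
        · intro k
          rw [ae_restrict_iff' measurableSet_Ioc]
          exact Eventually.of_forall fun s hs => hb_bdd s (hsub hs) _
        · rw [ae_restrict_iff' measurableSet_Ioc]
          refine Eventually.of_forall fun s hs => ?_
          have hsI : s ∈ Icc (0:ℝ) T := hsub hs
          have hfss : Tendsto (fun k => fs (φ k) s) atTop (nhds (L s)) := by
            rw [hLΛ s hsI]; exact hΛ s hsI
          have hbc := hb_cont (s, L s) ⟨hsI, trivial⟩
          have hps : Tendsto (fun k => ((s : ℝ), fs (φ k) s)) atTop
              (nhdsWithin (s, L s) ((Icc 0 T) ×ˢ univ)) := by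
            rw [tendsto_nhdsWithin_iff]
            exact ⟨(tendsto_const_nhds).prodMk_nhds hfss,
              Eventually.of_forall fun k => ⟨hsI, trivial⟩⟩
          exact hbc.tendsto.comp hps
      exact (hx.add hint).add tendsto_const_nhds
    have heqk : ∀ k, fs (φ k) t = xs (φ k) + (∫ s in Ioc (0:ℝ) t, b s (fs (φ k) s)) + β t :=
      fun k => hfs_eq (φ k) t ht
    have : Tendsto (fun k => fs (φ k) t) atTop
        (nhds (x₀ + (∫ s in Ioc (0:ℝ) t, b s (L s)) + β t)) := by
      rw [show (fun k => fs (φ k) t) = fun k =>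
        xs (φ k) + (∫ s in Ioc (0:ℝ) t, b s (fs (φ k) s)) + β t from funext heqk]
      exact hlim2
    exact tendsto_nhds_unique hlim1 this

end det2

section det3
variable {d : ℕ} {T C : ℝ}
  {b : ℝ → EuclideanSpace ℝ (Fin d) → EuclideanSpace ℝ (Fin d)}
  {β : ℝ → EuclideanSpace ℝ (Fin d)}

lemma det_unif (hC : 0 ≤ C)
    (hb_cont : ContinuousOn (Function.uncurry b) ((Icc 0 T) ×ˢ univ))
    (hb_bdd : ∀ t ∈ Icc (0:ℝ) T, ∀ y, ‖b t y‖ ≤ C)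
    (hβ : ContinuousOn β (Icc 0 T))
    (tm : ℕ → ℝ) (htm : ∀ m, tm m ∈ Icc (0:ℝ) T)
    (ρ : ℝ → ℕ → ℕ)
    (hρ : ∀ t ∈ Icc (0:ℝ) T, ∀ j : ℕ, |tm (ρ t j) - t| < 1/(j+1))
    (xs : ℕ → EuclideanSpace ℝ (Fin d)) (x₀ : EuclideanSpace ℝ (Fin d))
    (fs : ℕ → ℝ → EuclideanSpace ℝ (Fin d)) (f₀ : ℝ → EuclideanSpace ℝ (Fin d))
    (hfs_cont : ∀ n, ContinuousOn (fs n) (Icc 0 T))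
    (hf₀_cont : ContinuousOn f₀ (Icc 0 T))
    (hfs_eq : ∀ n, ∀ t ∈ Icc (0:ℝ) T,
      fs n t = xs n + (∫ s in Ioc (0:ℝ) t, b s (fs n s)) + β t)
    (hf₀_eq : ∀ t ∈ Icc (0:ℝ) T,
      f₀ t = x₀ + (∫ s in Ioc (0:ℝ) t, b s (f₀ s)) + β t)
    (hpt : ∀ m, Tendsto (fun n => fs n (tm m)) atTop (nhds (f₀ (tm m)))) :
    ∀ ε > (0:ℝ), ∀ᶠ n in atTop, ∀ t ∈ Icc (0:ℝ) T, ‖fs n t - f₀ t‖ < ε := by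
  intro ε hε
  have hmod : ∀ n, ∀ s ∈ Icc (0:ℝ) T, ∀ t ∈ Icc (0:ℝ) T,
      ‖fs n t - fs n s‖ ≤ C * |t - s| + ‖β t - β s‖ :=
    fun n => det_modulus' hb_cont hb_bdd (xs n) (hfs_cont n) (hfs_eq n)
  have hmod₀ : ∀ s ∈ Icc (0:ℝ) T, ∀ t ∈ Icc (0:ℝ) T,
      ‖f₀ t - f₀ s‖ ≤ C * |t - s| + ‖β t - β s‖ :=
    det_modulus' hb_cont hb_bdd x₀ hf₀_cont hf₀_eq
  have hβu := isCompact_Icc.uniformContinuousOn_of_continuous hβ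
  obtain ⟨δ₁, hδ₁pos, hδ₁⟩ := Metric.uniformContinuousOn_iff.1 hβu (ε/6) (by positivity)
  set δ := min δ₁ (ε/(6*(C+1))) with hδdef
  have hδpos : 0 < δ := lt_min hδ₁pos (by positivity)
  have hCδ : C * δ ≤ ε/6 := by
    have h1 : δ ≤ ε/(6*(C+1)) := min_le_right _ _
    have h6 : (0:ℝ) < 6*(C+1) := by positivity
    calc C * δ ≤ C * (ε/(6*(C+1))) := mul_le_mul_of_nonneg_left h1 hC
      _ ≤ ε/6 := by
          rw [mul_div_assoc', div_le_div_iff₀ h6 (by norm_num : (0:ℝ) < 6)]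
          nlinarith [hε.le]
  have hcover : Icc (0:ℝ) T ⊆ ⋃ m : ℕ, Metric.ball (tm m) δ := by
    intro t ht
    obtain ⟨j, hj⟩ := exists_nat_one_div_lt hδpos
    refine Set.mem_iUnion.2 ⟨ρ t j, ?_⟩
    rw [Metric.mem_ball, Real.dist_eq, abs_sub_comm]
    exact (hρ t ht j).trans hj
  obtain ⟨F, hF⟩ := isCompact_Icc.elim_finite_subcover (fun m : ℕ => Metric.ball (tm m) δ)
    (fun m => Metric.isOpen_ball) hcover
  have hev : ∀ᶠ n in atTop, ∀ m ∈ F, dist (fs n (tm m)) (f₀ (tm m)) < ε/6 := by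
    rw [eventually_all_finset]
    intro m _
    exact Metric.tendsto_nhds.mp (hpt m) (ε/6) (by positivity)
  filter_upwards [hev] with n hn t ht
  obtain ⟨m, hmF, htb⟩ := Set.mem_iUnion₂.1 (hF ht)
  have hdtm : dist t (tm m) < δ := Metric.mem_ball.1 htb
  have hβ1 : ‖β t - β (tm m)‖ < ε/6 := by
    have := hδ₁ t ht (tm m) (htm m) (hdtm.trans_le (min_le_left _ _))
    rwa [dist_eq_norm] at this
  have hβ2 : ‖β (tm m) - β t‖ < ε/6 := by
    rwa [norm_sub_rev]
  have h1 : ‖fs n t - fs n (tm m)‖ < ε/6 + ε/6 := by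
    have := hmod n (tm m) (htm m) t ht
    have habs : C * |t - tm m| ≤ ε/6 := by
      have : |t - tm m| ≤ δ := by rw [← Real.dist_eq]; exact hdtm.le
      calc C * |t - tm m| ≤ C * δ := mul_le_mul_of_nonneg_left this hC
        _ ≤ ε/6 := hCδ
    linarith
  have h2 : ‖fs n (tm m) - f₀ (tm m)‖ < ε/6 := by
    rw [← dist_eq_norm]; exact hn m hmF
  have h3 : ‖f₀ (tm m) - f₀ t‖ < ε/6 + ε/6 := by
    have := hmod₀ t ht (tm m) (htm m)
    have habs : C * |tm m - t| ≤ ε/6 := by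
      have : |tm m - t| ≤ δ := by rw [← Real.dist_eq, dist_comm]; exact hdtm.le
      calc C * |tm m - t| ≤ C * δ := mul_le_mul_of_nonneg_left this hC
        _ ≤ ε/6 := hCδ
    linarith
  have hsplit : fs n t - f₀ t =
      (fs n t - fs n (tm m)) + (fs n (tm m) - f₀ (tm m)) + (f₀ (tm m) - f₀ t) := by abel
  calc ‖fs n t - f₀ t‖ ≤ ‖fs n t - fs n (tm m)‖ + ‖fs n (tm m) - f₀ (tm m)‖
        + ‖f₀ (tm m) - f₀ t‖ := by rw [hsplit]; exact norm_add₃_le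
    _ < ε := by linarith

end det3

noncomputable def pmax (v : ℕ → ℝ) : ℕ → ℝ
  | 0 => v 0
  | k+1 => max (pmax v k) (v (k+1))

lemma pmax_mono (v : ℕ → ℝ) : Monotone (pmax v) :=
  monotone_nat_of_le_succ fun k => le_max_left _ _

lemma le_pmax (v : ℕ → ℝ) {m k : ℕ} (h : m ≤ k) : v m ≤ pmax v k := by
  induction k with
  | zero => rw [Nat.le_zero.1 h]; exact le_rfl
  | succ k ih =>
    rcases Nat.lt_succ_iff_lt_or_eq.1 (Nat.lt_succ_of_le h) with h' | h'
    · exact le_trans (ih (Nat.lt_succ_iff.1 h')) (le_max_left _ _)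
    · rw [h']; exact le_max_right _ _

lemma pmax_le (v : ℕ → ℝ) {c : ℝ} {k : ℕ} (h : ∀ m ≤ k, v m ≤ c) : pmax v k ≤ c := by
  induction k with
  | zero => exact h 0 le_rfl
  | succ k ih =>
    exact max_le (ih fun m hm => h m (hm.trans (Nat.le_succ k)))
      (h (k+1) le_rfl)

lemma det_pmax {T : ℝ} (hT : 0 < T) {h : ℝ → ℝ} (hh : ContinuousOn h (Icc 0 T))
    (tm : ℕ → ℝ) (htm : ∀ m, tm m ∈ Icc (0:ℝ) T)
    (ρ : ℝ → ℕ → ℕ)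
    (hρ : ∀ t ∈ Icc (0:ℝ) T, ∀ j : ℕ, |tm (ρ t j) - t| < 1/(j+1)) :
    Tendsto (pmax (fun m => h (tm m))) atTop
      (nhds (⨆ t : Icc (0:ℝ) T, h t)) := by
  have hne : (Icc (0:ℝ) T).Nonempty := ⟨0, le_rfl, hT.le⟩
  obtain ⟨ts, hts, hmax⟩ := isCompact_Icc.exists_isMaxOn hne hh
  have hmax' : ∀ y ∈ Icc (0:ℝ) T, h y ≤ h ts := hmax
  have hneI : Nonempty (Icc (0:ℝ) T) := ⟨⟨0, le_rfl, hT.le⟩⟩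
  have hsup_eq : (⨆ t : Icc (0:ℝ) T, h t) = h ts := by
    apply le_antisymm
    · exact ciSup_le fun t => hmax' t t.2
    · have hbdd : BddAbove (Set.range fun t : Icc (0:ℝ) T => h t) :=
        ⟨h ts, by rintro x ⟨t, rfl⟩; exact hmax' t t.2⟩
      exact le_ciSup hbdd (⟨ts, hts⟩ : Icc (0:ℝ) T)
  rw [hsup_eq]
  set v : ℕ → ℝ := fun m => h (tm m) with hv
  have hub : ∀ k, pmax v k ≤ h ts := fun k => pmax_le v fun m _ => hmax' (tm m) (htm m)
  have hbdd : BddAbove (Set.range (pmax v)) := ⟨h ts, by rintro x ⟨k, rfl⟩; exact hub k⟩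
  have htendsup : Tendsto (pmax v) atTop (nhds (⨆ k, pmax v k)) :=
    tendsto_atTop_ciSup (pmax_mono v) hbdd
  have hc_le : (⨆ k, pmax v k) ≤ h ts := ciSup_le hub
  have hle_c : h ts ≤ ⨆ k, pmax v k := by
    have htmts : Tendsto (fun j => h (tm (ρ ts j))) atTop (nhds (h ts)) := by
      have htmt : Tendsto (fun j => tm (ρ ts j)) atTop (nhdsWithin ts (Icc (0:ℝ) T)) := by
        rw [tendsto_nhdsWithin_iff]
        constructor
        · rw [tendsto_iff_dist_tendsto_zero]
          refine squeeze_zero (fun j => dist_nonneg) (fun j => ?_)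
            tendsto_one_div_add_atTop_nhds_zero_nat
          rw [Real.dist_eq]
          exact (hρ ts hts j).le
        · exact Eventually.of_forall fun j => htm _
      exact (hh ts hts).tendsto.comp htmt
    refine le_of_tendsto htmts (Eventually.of_forall fun j => ?_)
    have h1 : v (ρ ts j) ≤ pmax v (ρ ts j) := le_pmax v le_rfl
    have h2 : pmax v (ρ ts j) ≤ ⨆ k, pmax v k := le_ciSup hbdd _
    exact h1.trans h2
  have : (⨆ k, pmax v k) = h ts := le_antisymm hc_le hle_c
  rwa [this] at htendsup
noncomputable section

/-- A `d`-dimensional fractional Brownian motion with Hurst parameter `H` on `[0,T]`: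
a measurable, a.s. continuous process starting at `0`, which is jointly Gaussian
(every finite linear combination of its components is Gaussian) and whose components
are centered with covariance `E[B^i_t B^j_s] = δ_{ij} (t^{2H} + s^{2H} - |t-s|^{2H})/2`. -/
def IsFBM {Ω : Type} [MeasurableSpace Ω] (P : Measure Ω) (d : ℕ) (H T : ℝ)
    (B : ℝ → Ω → EuclideanSpace ℝ (Fin d)) : Prop :=
  (∀ t, Measurable (B t)) ∧
  (∀ᵐ ω ∂P, ContinuousOn (fun t => B t ω) (Set.Icc 0 T)) ∧
  (∀ ω, B 0 ω = 0) ∧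
  (∀ (n : ℕ) (t : Fin n → ℝ) (i : Fin n → Fin d) (a : Fin n → ℝ),
      (∀ k, t k ∈ Set.Icc (0:ℝ) T) →
      ∃ v : NNReal, P.map (fun ω => ∑ k, a k * B (t k) ω (i k)) = gaussianReal 0 v) ∧
  (∀ i j : Fin d, ∀ s ∈ Set.Icc (0:ℝ) T, ∀ t ∈ Set.Icc (0:ℝ) T,
      ∫ ω, (B t ω i) * (B s ω j) ∂P =
        if i = j then (t ^ (2*H) + s ^ (2*H) - |t - s| ^ (2*H)) / 2 else 0)

/-- `X` is a solution (on the given space) of the SDE `X_t = x + ∫_0^t b(s,X_s) ds + B_t`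
on `[0,T]`: a measurable process with a.s. continuous paths satisfying the integral
equation a.s. -/
def SolvesSDE {Ω : Type} [MeasurableSpace Ω] (P : Measure Ω) (d : ℕ) (T : ℝ)
    (b : ℝ → EuclideanSpace ℝ (Fin d) → EuclideanSpace ℝ (Fin d))
    (B : ℝ → Ω → EuclideanSpace ℝ (Fin d)) (x : EuclideanSpace ℝ (Fin d))
    (X : ℝ → Ω → EuclideanSpace ℝ (Fin d)) : Prop :=
  (∀ t, Measurable (X t)) ∧
  (∀ᵐ ω ∂P, ContinuousOn (fun t => X t ω) (Set.Icc 0 T)) ∧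
  (∀ᵐ ω ∂P, ∀ t ∈ Set.Icc (0:ℝ) T,
      X t ω = x + (∫ s in Set.Ioc (0:ℝ) t, b s (X s ω)) + B t ω)

/-- A strong solution: a solution that is adapted to the filtration generated by `B`,
augmented by the `P`-null sets (i.e. each `X t` agrees a.s. with a random variable that
is measurable with respect to the σ-algebra generated by `(B s)_{0 ≤ s ≤ t}`). -/
def StrongSolution {Ω : Type} [MeasurableSpace Ω] (P : Measure Ω) (d : ℕ) (T : ℝ)
    (b : ℝ → EuclideanSpace ℝ (Fin d) → EuclideanSpace ℝ (Fin d))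
    (B : ℝ → Ω → EuclideanSpace ℝ (Fin d)) (x : EuclideanSpace ℝ (Fin d))
    (X : ℝ → Ω → EuclideanSpace ℝ (Fin d)) : Prop :=
  SolvesSDE P d T b B x X ∧
  ∀ t ∈ Set.Icc (0:ℝ) T, ∃ Y : Ω → EuclideanSpace ℝ (Fin d),
    Measurable[⨆ s ∈ Set.Icc (0:ℝ) t, MeasurableSpace.comap (B s) inferInstance] Y ∧
    X t =ᵐ[P] Y

/-- Pathwise uniqueness for the SDE `dX_t = b(t,X_t) dt + dB^H_t` on `[0,T]`:
any two solutions defined on the same probability space, driven by the same fractional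
Brownian motion and with the same initial condition, are indistinguishable on `[0,T]`. -/
def PathwiseUniqueness (d : ℕ) (H T : ℝ)
    (b : ℝ → EuclideanSpace ℝ (Fin d) → EuclideanSpace ℝ (Fin d)) : Prop :=
  ∀ (Ω : Type) (_ : MeasurableSpace Ω) (P : Measure Ω), IsProbabilityMeasure P →
    ∀ B : ℝ → Ω → EuclideanSpace ℝ (Fin d), IsFBM P d H T B →
    ∀ (x : EuclideanSpace ℝ (Fin d)) (X Y : ℝ → Ω → EuclideanSpace ℝ (Fin d)),
      SolvesSDE P d T b B x X → SolvesSDE P d T b B x Y →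
      ∀ᵐ ω ∂P, ∀ t ∈ Set.Icc (0:ℝ) T, X t ω = Y t ω

/-- if `b` is continuous, bounded and measurable and pathwise uniqueness
holds for the SDE `dX_t = b(t,X_t) dt + dB^H_t`, then the strong solutions depend
continuously on the initial condition:
`E[sup_{0 ≤ t ≤ T} |X_t(x) - X_t(x₀)|²] → 0` as `x → x₀`. -/
theorem continuity_in_initial_condition_continuous_drift
    {Ω : Type} [MeasurableSpace Ω] (P : Measure Ω) [IsProbabilityMeasure P]
    (d : ℕ) (hd : 1 ≤ d) (H T : ℝ) (hH0 : 0 < H) (hH : H < 1/2) (hT : 0 < T)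
    (b : ℝ → EuclideanSpace ℝ (Fin d) → EuclideanSpace ℝ (Fin d))
    (hb_meas : Measurable (Function.uncurry b))
    (hb_cont : ContinuousOn (Function.uncurry b)
      (Set.Icc (0:ℝ) T ×ˢ (Set.univ : Set (EuclideanSpace ℝ (Fin d)))))
    (C : ℝ) (hb_bdd : ∀ t ∈ Set.Icc (0:ℝ) T, ∀ y, ‖b t y‖ ≤ C)
    (B : ℝ → Ω → EuclideanSpace ℝ (Fin d)) (hB : IsFBM P d H T B)
    (X : EuclideanSpace ℝ (Fin d) → ℝ → Ω → EuclideanSpace ℝ (Fin d))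
    (hX : ∀ x, StrongSolution P d T b B x (X x))
    (hPU : PathwiseUniqueness d H T b)
    (x₀ : EuclideanSpace ℝ (Fin d)) :
    Filter.Tendsto
      (fun x => ∫ ω, (⨆ t : Set.Icc (0:ℝ) T, ‖X x (t : ℝ) ω - X x₀ (t : ℝ) ω‖ ^ 2) ∂P)
      (nhds x₀) (nhds 0) := by  classical
  have hC0 : 0 ≤ C := le_trans (norm_nonneg _) (hb_bdd 0 ⟨le_rfl, hT.le⟩ 0)
  have hdpos : 0 < d := hd
  have hne : Nonempty (Set.Icc (0:ℝ) T) := ⟨⟨0, le_rfl, hT.le⟩⟩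
  rw [Filter.tendsto_iff_seq_tendsto]
  intro u hu
  obtain ⟨tm, htm, htmd⟩ := exists_tm T hT
  -- rational approximation indices
  have hρ0 : ∀ (t : ℝ) (j : ℕ), ∃ m, |tm m - max 0 (min T t)| < 1/(j+1) := fun t j =>
    htmd _ ⟨le_max_left _ _, max_le hT.le (min_le_left _ _)⟩ _ (by positivity)
  choose ρ hρc using hρ0
  have hρ : ∀ t ∈ Set.Icc (0:ℝ) T, ∀ j : ℕ, |tm (ρ t j) - t| < 1/(j+1) := by
    intro t ht j
    have hcl : max 0 (min T t) = t := by
      rw [min_eq_right ht.2, max_eq_right ht.1]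
    have := hρc t j
    rwa [hcl] at this
  -- coordinate measurability of the solution processes
  have hXc : ∀ (y : EuclideanSpace ℝ (Fin d)) (t : ℝ) (i : Fin d),
      Measurable fun ω => X y t ω i := fun y t i =>
    ((EuclideanSpace.proj (𝕜 := ℝ) i).continuous.measurable).comp ((hX y).1.1 t)
  -- a.e. regularity events
  have haeB : ∀ᵐ ω ∂P, ContinuousOn (fun t => B t ω) (Set.Icc 0 T) := hB.2.1
  have haeX : ∀ᵐ ω ∂P, ∀ n, ContinuousOn (fun t => X (u n) t ω) (Set.Icc 0 T) ∧
      ∀ t ∈ Set.Icc (0:ℝ) T,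
        X (u n) t ω = u n + (∫ s in Set.Ioc (0:ℝ) t, b s (X (u n) s ω)) + B t ω := by
    rw [MeasureTheory.ae_all_iff]
    intro n
    filter_upwards [(hX (u n)).1.2.1, (hX (u n)).1.2.2] with ω h1 h2 using ⟨h1, h2⟩
  have haeX0 : ∀ᵐ ω ∂P, ContinuousOn (fun t => X x₀ t ω) (Set.Icc 0 T) ∧
      ∀ t ∈ Set.Icc (0:ℝ) T,
        X x₀ t ω = x₀ + (∫ s in Set.Ioc (0:ℝ) t, b s (X x₀ s ω)) + B t ω := by
    filter_upwards [(hX x₀).1.2.1, (hX x₀).1.2.2] with ω h1 h2 using ⟨h1, h2⟩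
  -- bounds on the initial conditions
  obtain ⟨Ru, hRu⟩ : ∃ R : ℝ, ∀ n, ‖u n‖ ≤ R := by
    obtain ⟨R, hR⟩ := (hu.norm).bddAbove_range
    exact ⟨R, fun n => hR ⟨n, rfl⟩⟩
  obtain ⟨Rd, hRd⟩ : ∃ R : ℝ, ∀ n, ‖u n - x₀‖ ≤ R := by
    have : Tendsto (fun n => ‖u n - x₀‖) atTop (nhds ‖x₀ - x₀‖) :=
      ((hu.sub tendsto_const_nhds).norm)
    obtain ⟨R, hR⟩ := this.bddAbove_range
    exact ⟨R, fun n => hR ⟨n, rfl⟩⟩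
  -- THE KEY STEP : for every head (m₀, i₀, sgn), pathwise uniqueness identifies the
  -- corresponding extreme cluster value with the value of X x₀.
  have key : ∀ (m₀ : ℕ) (i₀ : Fin d) (sgn : Bool), ∀ᵐ ω ∂P,
      X x₀ (tm m₀) ω i₀ = cond sgn (liminf (fun n => X (u n) (tm m₀) ω i₀) atTop)
        (-(liminf (fun n => -(X (u n) (tm m₀) ω i₀)) atTop)) := by
    intro m₀ i₀ sgn
    set Ah : Ω → ℕ → ℕ → ℝ := fun ω n l =>
      Nat.casesOn l (cond sgn (X (u n) (tm m₀) ω i₀) (-(X (u n) (tm m₀) ω i₀)))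
        (fun l' => X (u n) (tm (l'/d)) ω ⟨l' % d, Nat.mod_lt _ hdpos⟩) with hAh
    set rvh : Ω → ℕ → Fin d → ℝ := fun ω m i => mr (Ah ω) (d * m + i.1 + 1) with hrvh
    set Yh : ℝ → Ω → EuclideanSpace ℝ (Fin d) := fun t ω =>
      (MeasurableEquiv.toLp 2 (Fin d → ℝ))
        (fun i => liminf (fun j => rvh ω (ρ t j) i) atTop) with hYhdef
    have hYcoord : ∀ (t : ℝ) (ω : Ω) (i : Fin d),
        Yh t ω i = liminf (fun j => rvh ω (ρ t j) i) atTop := fun t ω i => rfl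
    have hAmeas : ∀ n l, Measurable fun ω => Ah ω n l := by
      intro n l
      cases l with
      | zero =>
        cases sgn
        · exact (hXc (u n) (tm m₀) i₀).neg
        · exact hXc (u n) (tm m₀) i₀
      | succ l' => exact hXc (u n) (tm (l'/d)) _
    have hYmeas : ∀ t, Measurable (Yh t) := by
      intro t
      have h1 : Measurable fun ω => (fun i => liminf (fun j => rvh ω (ρ t j) i) atTop :
          Fin d → ℝ) := by
        refine measurable_pi_lambda _ fun i => ?_
        refine Measurable.liminf fun j => ?_
        exact measurable_mr (fun ω => Ah ω) hAmeas _
      exact (MeasurableEquiv.toLp 2 (Fin d → ℝ)).measurable.comp h1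
    -- per-ω analysis
    have hanalysis : ∀ᵐ ω ∂P,
        ContinuousOn (fun t => Yh t ω) (Set.Icc 0 T) ∧
        (∀ t ∈ Set.Icc (0:ℝ) T,
          Yh t ω = x₀ + (∫ s in Set.Ioc (0:ℝ) t, b s (Yh s ω)) + B t ω) ∧
        Yh (tm m₀) ω i₀ = cond sgn (liminf (fun n => X (u n) (tm m₀) ω i₀) atTop)
          (-(liminf (fun n => -(X (u n) (tm m₀) ω i₀)) atTop)) := by
      filter_upwards [haeB, haeX] with ω hβc hXn
      obtain ⟨Kβ, hKβ⟩ := isCompact_Icc.exists_bound_of_continuousOn hβc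
      set M : ℝ := Ru + C * T + Kβ with hM
      have hfs_bound : ∀ n, ∀ t ∈ Set.Icc (0:ℝ) T, ‖X (u n) t ω‖ ≤ M := by
        intro n t ht
        have := det_bound hb_cont hb_bdd (u n) (hXn n).2 t ht
        have h2 := hKβ t ht
        have h3 := hRu n
        simp only [hM]
        linarith
      have hbnd : ∀ n l, |Ah ω n l| ≤ M := by
        intro n l
        cases l with
        | zero =>
          have h1 : |X (u n) (tm m₀) ω i₀| ≤ M :=
            (coord_abs_le_norm _ i₀).trans (hfs_bound n (tm m₀) (htm m₀))
          cases sgn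
          · show |(-(X (u n) (tm m₀) ω i₀))| ≤ M
            rwa [abs_neg]
          · exact h1
        | succ l' =>
          exact (coord_abs_le_norm _ _).trans (hfs_bound n (tm (l'/d)) (htm _))
      obtain ⟨φ, hφ, hconvA⟩ := mr_subseq (Ah ω) (fun _ => M) (fun n l => hbnd n l)
      have hconv : ∀ m i, Tendsto (fun k => X (u (φ k)) (tm m) ω i) atTop
          (nhds (rvh ω m i)) := by
        intro m i
        have hdiv : (d * m + i.1)/d = m := by
          rw [Nat.mul_add_div hdpos, Nat.div_eq_of_lt i.2, add_zero]
        have hmod : (d * m + i.1) % d = i.1 := by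
          rw [Nat.mul_add_mod]
          exact Nat.mod_eq_of_lt i.2
        have hfin : (⟨(d * m + i.1) % d, Nat.mod_lt _ hdpos⟩ : Fin d) = i := Fin.ext hmod
        have hAeq : ∀ n, Ah ω n (d * m + i.1 + 1) = X (u n) (tm m) ω i := by
          intro n
          show X (u n) (tm ((d * m + i.1)/d)) ω ⟨(d * m + i.1) % d, _⟩ = X (u n) (tm m) ω i
          rw [hdiv, hfin]
        have := hconvA (d * m + i.1 + 1)
        simp_rw [hAeq] at this
        exact this
      have hdet := det_main hT hC0 hb_cont hb_bdd hβc tm htm ρ hρ u x₀ hu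
        (fun n t => X (u n) t ω) (fun n => (hXn n).1) (fun n => (hXn n).2) φ hφ
        (rvh ω) hconv (fun t => Yh t ω) (fun t _ i => hYcoord t ω i)
      refine ⟨hdet.2.1, hdet.2.2, ?_⟩
      -- identification of the head coordinate
      have hYci : Tendsto (fun k => X (u (φ k)) (tm m₀) ω i₀) atTop
          (nhds (Yh (tm m₀) ω i₀)) :=
        (((EuclideanSpace.proj (𝕜 := ℝ) i₀).continuous.tendsto _).comp
          (hdet.1 (tm m₀) (htm m₀)))
      have h0A := hconvA 0
      have hmr0 : mr (Ah ω) 0 = liminf (fun n => Ah ω n 0) atTop := mr_zero (Ah ω)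
      cases sgn with
      | false =>
        have hA0 : ∀ n, Ah ω n 0 = -(X (u n) (tm m₀) ω i₀) := fun n => rfl
        have h0A' : Tendsto (fun k => -(X (u (φ k)) (tm m₀) ω i₀)) atTop
            (nhds (mr (Ah ω) 0)) := by
          simp_rw [← hA0]; exact h0A
        have h0A'' : Tendsto (fun k => X (u (φ k)) (tm m₀) ω i₀) atTop
            (nhds (-(mr (Ah ω) 0))) := by
          have := h0A'.neg
          simpa using this
        have huniq : Yh (tm m₀) ω i₀ = -(mr (Ah ω) 0) := tendsto_nhds_unique hYci h0A''
        rw [huniq, hmr0]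
        simp only [cond_false]
        rw [show (fun n => Ah ω n 0) = fun n => -(X (u n) (tm m₀) ω i₀) from funext hA0]
      | true =>
        have hA0 : ∀ n, Ah ω n 0 = X (u n) (tm m₀) ω i₀ := fun n => rfl
        have h0A' : Tendsto (fun k => X (u (φ k)) (tm m₀) ω i₀) atTop
            (nhds (mr (Ah ω) 0)) := by
          simp_rw [← hA0]; exact h0A
        have huniq : Yh (tm m₀) ω i₀ = mr (Ah ω) 0 := tendsto_nhds_unique hYci h0A'
        rw [huniq, hmr0]
        simp only [cond_true]
        rw [show (fun n => Ah ω n 0) = fun n => X (u n) (tm m₀) ω i₀ from funext hA0]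
    have hsolY : SolvesSDE P d T b B x₀ Yh :=
      ⟨hYmeas, hanalysis.mono fun ω h => h.1, hanalysis.mono fun ω h => h.2.1⟩
    have hPUa := hPU Ω _ P inferInstance B hB x₀ (X x₀) Yh (hX x₀).1 hsolY
    filter_upwards [hPUa, hanalysis] with ω h1 h2
    rw [h1 (tm m₀) (htm m₀)]
    exact h2.2.2
  -- pointwise convergence at the dense set of times
  have keyall : ∀ᵐ ω ∂P, ∀ (m : ℕ) (i : Fin d) (sgn : Bool),
      X x₀ (tm m) ω i = cond sgn (liminf (fun n => X (u n) (tm m) ω i) atTop)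
        (-(liminf (fun n => -(X (u n) (tm m) ω i)) atTop)) := by
    rw [MeasureTheory.ae_all_iff]
    intro m
    rw [MeasureTheory.ae_all_iff]
    intro i
    rw [MeasureTheory.ae_all_iff]
    intro sgn
    exact key m i sgn
  have hptconv : ∀ᵐ ω ∂P, ∀ m, Tendsto (fun n => X (u n) (tm m) ω) atTop
      (nhds (X x₀ (tm m) ω)) := by
    filter_upwards [keyall, haeB, haeX] with ω hk hβc hXn
    intro m
    rw [tendsto_euclid_iff]
    intro i
    obtain ⟨Kβ, hKβ⟩ := isCompact_Icc.exists_bound_of_continuousOn hβc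
    set M : ℝ := Ru + C * T + Kβ with hM
    have hgb : ∀ n, |X (u n) (tm m) ω i| ≤ M := by
      intro n
      refine (coord_abs_le_norm _ i).trans ?_
      have := det_bound hb_cont hb_bdd (u n) (hXn n).2 (tm m) (htm m)
      have h2 := hKβ (tm m) (htm m)
      have h3 := hRu n
      simp only [hM]
      linarith
    refine tendsto_of_liminf_both _ _ M hgb ?_ ?_
    · exact (hk m i true).symm
    · have := hk m i false
      simp only [cond_false] at this
      linarith
  -- uniform convergence of suprema
  have hsup0 : ∀ᵐ ω ∂P, Tendsto
      (fun n => ⨆ t : Set.Icc (0:ℝ) T, ‖X (u n) (t : ℝ) ω - X x₀ (t : ℝ) ω‖ ^ 2) atTop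
      (nhds 0) := by
    filter_upwards [hptconv, haeB, haeX, haeX0] with ω hpt hβc hXn hX0
    have hunif := det_unif hC0 hb_cont hb_bdd hβc tm htm ρ hρ u x₀
      (fun n t => X (u n) t ω) (fun t => X x₀ t ω) (fun n => (hXn n).1) hX0.1
      (fun n => (hXn n).2) hX0.2 (fun m => hpt m)
    rw [Metric.tendsto_atTop]
    intro ε hε
    have hsq : (0:ℝ) < Real.sqrt (ε/2) := Real.sqrt_pos.2 (by linarith)
    obtain ⟨N, hN⟩ := eventually_atTop.1 (hunif (Real.sqrt (ε/2)) hsq)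
    refine ⟨N, fun n hn => ?_⟩
    have hbS : ∀ t : Set.Icc (0:ℝ) T, ‖X (u n) (t : ℝ) ω - X x₀ (t : ℝ) ω‖ ^ 2 ≤ ε/2 := by
      intro t
      have h1 := (hN n hn (t : ℝ) t.2).le
      calc ‖X (u n) (t : ℝ) ω - X x₀ (t : ℝ) ω‖ ^ 2
          ≤ (Real.sqrt (ε/2)) ^ 2 := pow_le_pow_left₀ (norm_nonneg _) h1 2
        _ = ε/2 := Real.sq_sqrt (by linarith)
    have hS0 : (0:ℝ) ≤ ⨆ t : Set.Icc (0:ℝ) T, ‖X (u n) (t : ℝ) ω - X x₀ (t : ℝ) ω‖ ^ 2 :=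
      Real.iSup_nonneg fun t => pow_nonneg (norm_nonneg _) 2
    have hSle := ciSup_le hbS
    have habs : (⨆ t : Set.Icc (0:ℝ) T, ‖X (u n) (t : ℝ) ω - X x₀ (t : ℝ) ω‖ ^ 2) - 0
        = ⨆ t : Set.Icc (0:ℝ) T, ‖X (u n) (t : ℝ) ω - X x₀ (t : ℝ) ω‖ ^ 2 := sub_zero _
    rw [Real.dist_eq, habs, abs_of_nonneg hS0]
    linarith
  -- uniform bound on suprema
  have hSbound : ∀ᵐ ω ∂P, ∀ n,
      (⨆ t : Set.Icc (0:ℝ) T, ‖X (u n) (t : ℝ) ω - X x₀ (t : ℝ) ω‖ ^ 2)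
        ≤ (Rd + 2*C*T)^2 := by
    filter_upwards [haeX, haeX0] with ω hXn hX0
    intro n
    refine ciSup_le fun t => ?_
    have hdiff : ‖X (u n) (t : ℝ) ω - X x₀ (t : ℝ) ω‖ ≤ Rd + 2*C*T := by
      have h1 := (hXn n).2 (t : ℝ) t.2
      have h2 := hX0.2 (t : ℝ) t.2
      have hsplit : X (u n) (t : ℝ) ω - X x₀ (t : ℝ) ω =
          (u n - x₀) + ((∫ s in Set.Ioc (0:ℝ) (t:ℝ), b s (X (u n) s ω))
            - (∫ s in Set.Ioc (0:ℝ) (t:ℝ), b s (X x₀ s ω))) := by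
        rw [h1, h2]; abel
      have hint : ∀ g : ℝ → EuclideanSpace ℝ (Fin d),
          (∀ s ∈ Set.Ioc (0:ℝ) (t:ℝ), ‖g s‖ ≤ C) →
          ‖∫ s in Set.Ioc (0:ℝ) (t:ℝ), g s‖ ≤ C * T := by
        intro g hg
        have hlt : volume (Set.Ioc (0:ℝ) (t:ℝ)) < ⊤ := by
          rw [Real.volume_Ioc]; exact ENNReal.ofReal_lt_top
        have := norm_setIntegral_le_of_norm_le_const (μ := volume) hlt
          hg
        rw [Measure.real, Real.volume_Ioc, sub_zero, ENNReal.toReal_ofReal (t.2 : _ ∈ Set.Icc _ _).1]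
          at this
        refine this.trans ?_
        exact mul_le_mul_of_nonneg_left (t.2.2) hC0
      have hb1 := hint _ (fun s hs => hb_bdd s ⟨hs.1.le, hs.2.trans t.2.2⟩ (X (u n) s ω))
      have hb2 := hint _ (fun s hs => hb_bdd s ⟨hs.1.le, hs.2.trans t.2.2⟩ (X x₀ s ω))
      rw [hsplit]
      have hs1 := norm_add_le (u n - x₀)
        ((∫ s in Set.Ioc (0:ℝ) (t:ℝ), b s (X (u n) s ω))
          - (∫ s in Set.Ioc (0:ℝ) (t:ℝ), b s (X x₀ s ω)))
      have hs2 := norm_sub_le (∫ s in Set.Ioc (0:ℝ) (t:ℝ), b s (X (u n) s ω))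
        (∫ s in Set.Ioc (0:ℝ) (t:ℝ), b s (X x₀ s ω))
      have := hRd n
      linarith
    exact pow_le_pow_left₀ (norm_nonneg _) hdiff 2
  -- measurability
  have hSmeas : ∀ n, AEMeasurable
      (fun ω => ⨆ t : Set.Icc (0:ℝ) T, ‖X (u n) (t : ℝ) ω - X x₀ (t : ℝ) ω‖ ^ 2) P := by
    intro n
    have hvmeas : ∀ k : ℕ, Measurable fun ω =>
        pmax (fun m => ‖X (u n) (tm m) ω - X x₀ (tm m) ω‖ ^ 2) k := by
      intro k
      induction k with
      | zero =>
        show Measurable fun ω => ‖X (u n) (tm 0) ω - X x₀ (tm 0) ω‖ ^ 2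
        exact ((((hX (u n)).1.1 (tm 0)).sub ((hX x₀).1.1 (tm 0))).norm).pow_const 2
      | succ k ih =>
        show Measurable fun ω => max (pmax _ k) (‖X (u n) (tm (k+1)) ω - X x₀ (tm (k+1)) ω‖ ^ 2)
        exact ih.max (((((hX (u n)).1.1 (tm (k+1))).sub ((hX x₀).1.1 (tm (k+1)))).norm).pow_const 2)
    refine aemeasurable_of_tendsto_metrizable_ae atTop (fun k => (hvmeas k).aemeasurable) ?_
    filter_upwards [haeX, haeX0] with ω hXn hX0
    have hcont : ContinuousOn (fun t => ‖X (u n) t ω - X x₀ t ω‖ ^ 2) (Set.Icc 0 T) :=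
      (((hXn n).1.sub hX0.1).norm).pow 2
    exact det_pmax hT hcont tm htm ρ hρ
  -- dominated convergence
  have hfinal : Tendsto
      (fun n => ∫ ω, (⨆ t : Set.Icc (0:ℝ) T, ‖X (u n) (t : ℝ) ω - X x₀ (t : ℝ) ω‖ ^ 2) ∂P)
      atTop (nhds (∫ _ω, (0:ℝ) ∂P)) := by
    refine tendsto_integral_of_dominated_convergence (fun _ => (Rd + 2*C*T)^2)
      (fun n => (hSmeas n).aestronglyMeasurable) (integrable_const _) ?_ ?_
    · intro n
      filter_upwards [hSbound] with ω hb'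
      have h0 : (0:ℝ) ≤ ⨆ t : Set.Icc (0:ℝ) T, ‖X (u n) (t : ℝ) ω - X x₀ (t : ℝ) ω‖ ^ 2 :=
        Real.iSup_nonneg fun t => pow_nonneg (norm_nonneg _) 2
      rw [Real.norm_eq_abs, abs_of_nonneg h0]
      exact hb' n
    · exact hsup0
  rw [integral_zero] at hfinal
  exact hfinal
end
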